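/- There exists a constant η₀ > 0, depending only on n, p, q, s, such that: (a) for every admissible function u on ℝ^n with ‖∇u‖_p > 0 and ‖u‖_s > 0, inf{F(τ_λ u) : λ > 0} = η₀ · G(u)^k, where k = q(np + ps − ns)/(np + pq − ns), and the infimum is attained; and (b) consequently φ(1) = inf{F(u) : u admissible, ‖u‖_q = 1} = η₀ · G^k, where G is the optimal Gagliardo–Nirenberg–Sobolev constant. -/

import Mathlib

open MeasureTheory Real Set

noncomputable section

abbrev Euc (n : ℕ) := EuclideanSpace ℝ (Fin n)

/-- The `L^r` norm of `u : ℝⁿ → ℝ` with respect to Lebesgue measure. -/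
def lpNorm (n : ℕ) (r : ℝ) (u : Euc n → ℝ) : ℝ :=
  (∫ x : Euc n, |u x| ^ r) ^ (1 / r)

/-- The `L^p` norm of the gradient of `u`. -/
def gradLpNorm (n : ℕ) (p : ℝ) (u : Euc n → ℝ) : ℝ :=
  (∫ x : Euc n, ‖fderiv ℝ u x‖ ^ p) ^ (1 / p)

/-- `u ∈ D^{p,s}(ℝⁿ)`: continuously differentiable with finite `L^s`, `L^q` and gradient `L^p`
norms. -/
structure Admissible (n : ℕ) (p s q : ℝ) (u : Euc n → ℝ) : Prop where
  smooth : ContDiff ℝ 1 u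
  int_s : Integrable (fun x : Euc n => |u x| ^ s)
  int_q : Integrable (fun x : Euc n => |u x| ^ q)
  int_grad : Integrable (fun x : Euc n => ‖fderiv ℝ u x‖ ^ p)

/-- The standing assumptions on the parameters `n, p, s, q, θ`. -/
structure Params (n : ℕ) (p s q θ : ℝ) : Prop where
  hn : 2 ≤ n
  hp : 1 < p
  hpn : p < n
  hs : 1 ≤ s
  hsq : s < q
  hq : q < n * p / (n - p)
  hθ0 : 0 < θ
  hθ1 : θ < 1
  hθ : θ / (n * p / (n - p)) + (1 - θ) / s = 1 / q

/-- The GNS quotient `‖∇u‖_p^θ ‖u‖_s^{1-θ} / ‖u‖_q`. -/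
def GNSRatio (n : ℕ) (p s q θ : ℝ) (u : Euc n → ℝ) : ℝ :=
  gradLpNorm n p u ^ θ * lpNorm n s u ^ (1 - θ) / lpNorm n q u

/-- The optimal Gagliardo–Nirenberg–Sobolev constant. -/
def GNSconst (n : ℕ) (p s q θ : ℝ) : ℝ :=
  sInf {c | ∃ u : Euc n → ℝ, Admissible n p s q u ∧ u ≠ 0 ∧ c = GNSRatio n p s q θ u}

/-- The GNS deficit `δ(u)`. -/
def deficit (n : ℕ) (p s q θ : ℝ) (u : Euc n → ℝ) : ℝ :=
  gradLpNorm n p u ^ θ * lpNorm n s u ^ (1 - θ) / (GNSconst n p s q θ * lpNorm n q u) - 1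

/-- `v` is an optimizer for the GNS inequality. -/
def IsOptimizer (n : ℕ) (p s q θ : ℝ) (v : Euc n → ℝ) : Prop :=
  Admissible n p s q v ∧ v ≠ 0 ∧
    gradLpNorm n p v ^ θ * lpNorm n s v ^ (1 - θ) = GNSconst n p s q θ * lpNorm n q v

/-- `v` is radially symmetric with non-increasing profile about the point `x₀`. -/
def IsCenter (n : ℕ) (v : Euc n → ℝ) (x₀ : Euc n) : Prop :=
  ∃ f : ℝ → ℝ, AntitoneOn f (Ici 0) ∧ ∀ x, v x = f ‖x - x₀‖

/-- The asymmetry `λ(u)`. -/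
def asym (n : ℕ) (p s q θ : ℝ) (u : Euc n → ℝ) : ℝ :=
  sInf {r | ∃ v : Euc n → ℝ, IsOptimizer n p s q θ v ∧ lpNorm n q v = lpNorm n q u ∧
    r = lpNorm n q (u - v) ^ q / lpNorm n q u ^ q}

/-- The relative asymmetry `λ(u|S)`: only optimizers whose center lies in `S` compete. -/
def relAsym (n : ℕ) (p s q θ : ℝ) (u : Euc n → ℝ) (S : Set (Euc n)) : ℝ :=
  sInf {r | ∃ (v : Euc n → ℝ) (x₀ : Euc n), IsOptimizer n p s q θ v ∧ IsCenter n v x₀ ∧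
    x₀ ∈ S ∧ lpNorm n q v = lpNorm n q u ∧
    r = lpNorm n q (u - v) ^ q / lpNorm n q u ^ q}

/-- `u` is radial non-increasing: `u(x) = f(|x|)` for a non-increasing `f : [0,∞) → [0,∞)`. -/
def RadialNonincreasing (n : ℕ) (u : Euc n → ℝ) : Prop :=
  ∃ f : ℝ → ℝ, AntitoneOn f (Ici 0) ∧ (∀ r ∈ Ici (0 : ℝ), 0 ≤ f r) ∧ ∀ x, u x = f ‖x‖

/-- Orthogonal reflection across the hyperplane `{x | ⟪v,x⟫ = c}` (for `‖v‖ = 1`). -/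
def reflAcross (n : ℕ) (v : Euc n) (c : ℝ) (x : Euc n) : Euc n :=
  x - (2 * ((inner ℝ v x : ℝ) - c)) • v

/-- `u` is invariant under the reflections across `k` mutually orthogonal hyperplanes with
unit normals `v i` and offsets `c i`. -/
def SymmetricAcrossOrtho (n k : ℕ) (u : Euc n → ℝ) (v : Fin k → Euc n) (c : Fin k → ℝ) : Prop :=
  (∀ i, ‖v i‖ = 1) ∧ (Pairwise fun i j => (inner ℝ (v i) (v j) : ℝ) = 0) ∧
    ∀ (i : Fin k) (x : Euc n), u (reflAcross n (v i) (c i) x) = u x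

/-- `u` is `k`-symmetric. -/
def NSym (n k : ℕ) (u : Euc n → ℝ) : Prop :=
  ∃ (v : Fin k → Euc n) (c : Fin k → ℝ), SymmetricAcrossOrtho n k u v c

/-- The rescaling `τ_λ u (x) = λ^{n/q} u (λ x)`, which preserves the `L^q` norm. -/
def rescale (n : ℕ) (q lam : ℝ) (u : Euc n → ℝ) : Euc n → ℝ :=
  fun x => lam ^ ((n : ℝ) / q) * u (lam • x)

/-- The functional `F(u) = ∫ |∇u|^p + ∫ |u|^s`. -/
def Ffun (n : ℕ) (p s : ℝ) (u : Euc n → ℝ) : ℝ :=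
  (∫ x : Euc n, ‖fderiv ℝ u x‖ ^ p) + ∫ x : Euc n, |u x| ^ s

/-- The functional `G(u) = ‖∇u‖_p^θ ‖u‖_s^{1-θ}`. -/
def Gfun (n : ℕ) (p s θ : ℝ) (u : Euc n → ℝ) : ℝ :=
  gradLpNorm n p u ^ θ * lpNorm n s u ^ (1 - θ)

/-- `φ(m) = inf {F(u) : ‖u‖_q^q = m}`. -/
def phi (n : ℕ) (p s q : ℝ) (m : ℝ) : ℝ :=
  sInf {c | ∃ u : Euc n → ℝ, Admissible n p s q u ∧ lpNorm n q u ^ q = m ∧ c = Ffun n p s u}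

/-- Volume of the unit ball in `ℝⁿ`. -/
def unitBallVol (n : ℕ) : ℝ := (volume (Metric.ball (0 : Euc n) 1)).toReal

/-- The spherically symmetric decreasing rearrangement `u^⋆`. -/
def rearr (n : ℕ) (u : Euc n → ℝ) : Euc n → ℝ :=
  fun x => sInf {t : ℝ | 0 < t ∧
    volume {y : Euc n | t < |u y|} ≤ ENNReal.ofReal (unitBallVol n * ‖x‖ ^ (n : ℝ))}

/-- The Pólya–Szegő deficit. -/
def deltaPS (n : ℕ) (p : ℝ) (u : Euc n → ℝ) : ℝ :=
  (gradLpNorm n p u - gradLpNorm n p (rearr n u)) / gradLpNorm n p (rearr n u)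

/-- `u` is symmetric with respect to each coordinate hyperplane `{x_i = 0}`. -/
def CoordSym (n : ℕ) (u : Euc n → ℝ) : Prop :=
  ∀ (i : Fin n) (x : Euc n), u (WithLp.toLp 2 (Function.update (WithLp.ofLp x) i (-(x i)))) = u x


/-! ### Auxiliary definitions and lemmas for stmt_19 -/

def expA (n : ℕ) (p q : ℝ) : ℝ := p * ((n : ℝ) / q + 1) - n

def expB (n : ℕ) (s q : ℝ) : ℝ := (n : ℝ) - s * ((n : ℝ) / q)

def kexp (n : ℕ) (p s q : ℝ) : ℝ :=
  q * ((n : ℝ) * p + p * s - (n : ℝ) * s) / ((n : ℝ) * p + p * q - (n : ℝ) * s)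

def eta0 (n : ℕ) (p s q : ℝ) : ℝ :=
  ((expA n p q + expB n s q) / expB n s q) ^ (expB n s q / (expA n p q + expB n s q)) *
    ((expA n p q + expB n s q) / expA n p q) ^ (expA n p q / (expA n p q + expB n s q))

lemma isLeast_scaling (α β A B : ℝ) (hα : 0 < α) (hβ : 0 < β) (hA : 0 < A) (hB : 0 < B) :
    IsLeast {r : ℝ | ∃ l > (0:ℝ), r = A * l ^ α + B * l ^ (-β)}
      (((α+β)/β) ^ (β/(α+β)) * ((α+β)/α) ^ (α/(α+β)) * (A ^ (β/(α+β)) * B ^ (α/(α+β)))) := by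
  have hγ : 0 < α + β := by linarith
  set γ := α + β with hγdef
  have hwsum : β/γ + α/γ = 1 := by rw [hγdef]; field_simp; ring
  have key : ∀ l : ℝ, 0 < l →
      ((γ/β) ^ (β/γ) * (γ/α) ^ (α/γ) * (A ^ (β/γ) * B ^ (α/γ)))
        = ((γ/β) * (A * l ^ α)) ^ (β/γ) * ((γ/α) * (B * l ^ (-β))) ^ (α/γ) := by
    intro l hl
    have hl' : (0:ℝ) ≤ l := hl.le
    have h1 : ((γ/β) * (A * l ^ α)) ^ (β/γ)
        = (γ/β) ^ (β/γ) * (A ^ (β/γ) * l ^ (α * (β/γ))) := by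
      rw [Real.mul_rpow (by positivity) (by positivity),
        Real.mul_rpow hA.le (by positivity), ← Real.rpow_mul hl']
    have h2 : ((γ/α) * (B * l ^ (-β))) ^ (α/γ)
        = (γ/α) ^ (α/γ) * (B ^ (α/γ) * l ^ ((-β) * (α/γ))) := by
      rw [Real.mul_rpow (by positivity) (by positivity),
        Real.mul_rpow hB.le (by positivity), ← Real.rpow_mul hl']
    rw [h1, h2]
    have h3 : l ^ (α * (β/γ)) * l ^ ((-β) * (α/γ)) = 1 := by
      rw [← Real.rpow_add hl]
      have : α * (β/γ) + (-β) * (α/γ) = 0 := by ring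
      rw [this, Real.rpow_zero]
    calc (γ/β) ^ (β/γ) * (γ/α) ^ (α/γ) * (A ^ (β/γ) * B ^ (α/γ))
        = (γ/β) ^ (β/γ) * (γ/α) ^ (α/γ) * (A ^ (β/γ) * B ^ (α/γ))
          * (l ^ (α * (β/γ)) * l ^ ((-β) * (α/γ))) := by rw [h3]; ring
      _ = (γ/β) ^ (β/γ) * (A ^ (β/γ) * l ^ (α * (β/γ)))
          * ((γ/α) ^ (α/γ) * (B ^ (α/γ) * l ^ ((-β) * (α/γ)))) := by ring
  constructor
  · -- membership: attained at l* = (β*B/(α*A))^(1/γ)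
    have hq : 0 < β*B/(α*A) := by positivity
    set l : ℝ := (β*B/(α*A)) ^ (1/γ) with hldef
    have hl : 0 < l := Real.rpow_pos_of_pos hq _
    have hxpos : 0 < A * l ^ α := by positivity
    have hypos : 0 < B * l ^ (-β) := by positivity
    have hlγ : l ^ γ = β*B/(α*A) := by
      rw [hldef, ← Real.rpow_mul hq.le, one_div, inv_mul_cancel₀ hγ.ne', Real.rpow_one]
    have hmul : l ^ α * l ^ β = l ^ γ := by rw [← Real.rpow_add hl]
    have hmul2 : l ^ (-β) * l ^ β = 1 := by
      rw [← Real.rpow_add hl, neg_add_cancel, Real.rpow_zero]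
    have hbal : α * (A * l ^ α) = β * (B * l ^ (-β)) := by
      have h5 : α * (A * l ^ α) * l ^ β = β * (B * l ^ (-β)) * l ^ β := by
        calc α * (A * l ^ α) * l ^ β = α * A * (l ^ α * l ^ β) := by ring
          _ = α * A * (β*B/(α*A)) := by rw [hmul, hlγ]
          _ = β * B := by field_simp
          _ = β * B * (l ^ (-β) * l ^ β) := by rw [hmul2, mul_one]
          _ = β * (B * l ^ (-β)) * l ^ β := by ring
      exact mul_right_cancel₀ (Real.rpow_pos_of_pos hl β).ne' h5
    have ht : (γ/β) * (A * l ^ α) = (γ/α) * (B * l ^ (-β)) := by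
      field_simp
      nlinarith [hbal]
    have hval : (γ/β) ^ (β/γ) * (γ/α) ^ (α/γ) * (A ^ (β/γ) * B ^ (α/γ))
        = A * l ^ α + B * l ^ (-β) := by
      rw [key l hl, ht]
      have htpos : 0 < (γ/α) * (B * l ^ (-β)) := by positivity
      rw [← Real.rpow_add htpos, hwsum, Real.rpow_one]
      have := ht.symm
      field_simp at this ⊢
      nlinarith [hbal]
    exact ⟨l, hl, hval⟩
  · rintro r ⟨l, hl, rfl⟩
    have hxpos : 0 < A * l ^ α := by positivity
    have hypos : 0 < B * l ^ (-β) := by positivity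
    rw [key l hl]
    calc ((γ/β) * (A * l ^ α)) ^ (β/γ) * ((γ/α) * (B * l ^ (-β))) ^ (α/γ)
        ≤ (β/γ) * ((γ/β) * (A * l ^ α)) + (α/γ) * ((γ/α) * (B * l ^ (-β))) :=
          Real.geom_mean_le_arith_mean2_weighted (by positivity) (by positivity)
            (by positivity) (by positivity) hwsum
      _ = A * l ^ α + B * l ^ (-β) := by field_simp


lemma exp_facts {n : ℕ} {p s q θ : ℝ} (hn : 2 ≤ (n:ℝ)) (hp : 1 < p) (hpn : p < (n:ℝ))
    (hs : 1 ≤ s) (hsq : s < q) (hq : q < (n:ℝ) * p / ((n:ℝ) - p)) (hθ0 : 0 < θ) (hθ1 : θ < 1)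
    (hθ : θ / ((n:ℝ) * p / ((n:ℝ) - p)) + (1 - θ) / s = 1 / q) :
    0 < expA n p q ∧ 0 < expB n s q ∧ 0 < kexp n p s q ∧
    θ * kexp n p s q = p * expB n s q / (expA n p q + expB n s q) ∧
    (1-θ) * kexp n p s q = s * expA n p q / (expA n p q + expB n s q) := by
  set nn : ℝ := (n : ℝ) with hnn
  have hq0 : 0 < q := by linarith
  have hs0 : 0 < s := by linarith
  have hnp : 0 < nn - p := by linarith
  have hp0 : 0 < p := by linarith
  have hq' : q * (nn - p) < nn * p := (lt_div_iff₀ hnp).mp hq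
  have hθ' : θ * (q * (nn*p - nn*s + p*s)) = nn*p*(q-s) := by
    field_simp at hθ
    linear_combination -hθ
  have hD : 0 < nn*p - nn*s + p*s := by nlinarith
  have hE : 0 < nn*p + p*q - nn*s := by nlinarith
  have hα : expA n p q = (nn*p + p*q - nn*q)/q := by rw [expA]; field_simp; ring
  have hβ : expB n s q = nn*(q-s)/q := by rw [expB]; field_simp; ring
  have hγ : expA n p q + expB n s q = (nn*p + p*q - nn*s)/q := by
    rw [expA, expB]; field_simp; ring
  have hkd : kexp n p s q = q * (nn*p + p*s - nn*s) / (nn*p + p*q - nn*s) := rfl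
  refine ⟨?_, ?_, ?_, ?_, ?_⟩
  · rw [hα]; exact div_pos (by nlinarith) hq0
  · rw [hβ]; exact div_pos (by nlinarith) hq0
  · rw [hkd]; exact div_pos (by nlinarith) hE
  · rw [hkd, hγ, hβ, ← mul_div_assoc,
      show θ*(q*(nn*p+p*s-nn*s)) = nn*p*(q-s) from by linear_combination hθ']
    rw [mul_div_assoc', div_div_div_cancel_right₀ hq0.ne']
    ring
  · rw [hkd, hγ, hα, ← mul_div_assoc,
      show (1-θ)*(q*(nn*p+p*s-nn*s)) = s*(nn*p+p*q-nn*q) from by linear_combination -hθ']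
    rw [mul_div_assoc', div_div_div_cancel_right₀ hq0.ne']


lemma fderiv_rescale {n : ℕ} {q lam : ℝ} {u : Euc n → ℝ} (hu : ContDiff ℝ 1 u) (x : Euc n) :
    fderiv ℝ (rescale n q lam u) x = (lam ^ ((n : ℝ) / q) * lam) • fderiv ℝ u (lam • x) := by
  have hd : HasFDerivAt u (fderiv ℝ u (lam • x)) (lam • x) :=
    (hu.differentiable one_ne_zero (lam • x)).hasFDerivAt
  have hsm : HasFDerivAt (fun y : Euc n => lam • y)
      (lam • ContinuousLinearMap.id ℝ (Euc n)) x := (hasFDerivAt_id x).const_smul lam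
  have hcomp : HasFDerivAt (fun y : Euc n => u (lam • y))
      ((fderiv ℝ u (lam • x)).comp (lam • ContinuousLinearMap.id ℝ (Euc n))) x :=
    hd.comp x hsm
  have h2 : HasFDerivAt (rescale n q lam u)
      ((lam ^ ((n : ℝ) / q)) •
        ((fderiv ℝ u (lam • x)).comp (lam • ContinuousLinearMap.id ℝ (Euc n)))) x :=
    hcomp.const_mul _
  have h3 : (lam ^ ((n : ℝ) / q)) •
        ((fderiv ℝ u (lam • x)).comp (lam • ContinuousLinearMap.id ℝ (Euc n)))
      = (lam ^ ((n : ℝ) / q) * lam) • fderiv ℝ u (lam • x) := by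
    ext y
    simp [mul_smul, (fderiv ℝ u (lam • x)).map_smul]
  rw [← h3]
  exact h2.fderiv

lemma rpow_pow_inv {lam : ℝ} (hlam : 0 < lam) (n : ℕ) :
    ((lam ^ n)⁻¹ : ℝ) = lam ^ (-(n : ℝ)) := by
  rw [← Real.rpow_natCast, ← Real.rpow_neg hlam.le]

lemma integral_abs_rescale {n : ℕ} {q lam : ℝ} (hlam : 0 < lam) (r : ℝ) (u : Euc n → ℝ) :
    ∫ x : Euc n, |rescale n q lam u x| ^ r
      = lam ^ (r * ((n : ℝ) / q) - n) * ∫ x : Euc n, |u x| ^ r := by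
  have hpt : ∀ x : Euc n, |rescale n q lam u x| ^ r
      = (lam ^ ((n : ℝ) / q)) ^ r * |u (lam • x)| ^ r := by
    intro x
    rw [rescale, abs_mul, abs_of_nonneg (Real.rpow_nonneg hlam.le _),
      Real.mul_rpow (Real.rpow_nonneg hlam.le _) (abs_nonneg _)]
  simp_rw [hpt]
  rw [integral_const_mul _ _,
    MeasureTheory.Measure.integral_comp_smul_of_nonneg volume (fun y => |u y| ^ r) lam
      (hR := hlam.le),
    finrank_euclideanSpace_fin, smul_eq_mul, ← mul_assoc]
  congr 1
  rw [rpow_pow_inv hlam, ← Real.rpow_mul hlam.le, ← Real.rpow_add hlam]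
  ring_nf

lemma integral_grad_rescale {n : ℕ} {q lam : ℝ} (hlam : 0 < lam) (p : ℝ) {u : Euc n → ℝ}
    (hu : ContDiff ℝ 1 u) :
    ∫ x : Euc n, ‖fderiv ℝ (rescale n q lam u) x‖ ^ p
      = lam ^ (p * ((n : ℝ) / q + 1) - n) * ∫ x : Euc n, ‖fderiv ℝ u x‖ ^ p := by
  have hc : (0:ℝ) ≤ lam ^ ((n : ℝ) / q) * lam := by positivity
  have hpt : ∀ x : Euc n, ‖fderiv ℝ (rescale n q lam u) x‖ ^ p
      = (lam ^ ((n : ℝ) / q) * lam) ^ p * ‖fderiv ℝ u (lam • x)‖ ^ p := by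
    intro x
    rw [fderiv_rescale hu, norm_smul, Real.norm_eq_abs, abs_of_nonneg hc,
      Real.mul_rpow hc (norm_nonneg _)]
  simp_rw [hpt]
  rw [integral_const_mul _ _,
    MeasureTheory.Measure.integral_comp_smul_of_nonneg volume
      (fun y => ‖fderiv ℝ u y‖ ^ p) lam (hR := hlam.le),
    finrank_euclideanSpace_fin, smul_eq_mul, ← mul_assoc]
  congr 1
  rw [rpow_pow_inv hlam, show lam ^ ((n:ℝ)/q) * lam = lam ^ ((n:ℝ)/q + 1) by
      rw [Real.rpow_add hlam, Real.rpow_one],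
    ← Real.rpow_mul hlam.le, ← Real.rpow_add hlam]
  ring_nf

-- positivity lemmas
lemma integral_pos_of_cont {n : ℕ} {g : Euc n → ℝ} (hg : Continuous g)
    (hnn : ∀ x, 0 ≤ g x) (hint : Integrable g) {x₀ : Euc n} (h0 : g x₀ ≠ 0) :
    0 < ∫ x, g x := by
  rw [integral_pos_iff_support_of_nonneg_ae (.of_forall hnn) hint]
  exact hg.isOpen_support.measure_pos volume ⟨x₀, h0⟩

-- smoothness of rescale
lemma contDiff_rescale {n : ℕ} (q lam : ℝ) {u : Euc n → ℝ} (hu : ContDiff ℝ 1 u) :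
    ContDiff ℝ 1 (rescale n q lam u) :=
  contDiff_const.mul (hu.comp (contDiff_id.const_smul lam))

lemma admissible_rescale {n : ℕ} {p s q : ℝ} {u : Euc n → ℝ} (hu : Admissible n p s q u)
    {lam : ℝ} (hlam : 0 < lam) : Admissible n p s q (rescale n q lam u) := by
  have habs : ∀ r : ℝ, (fun x : Euc n => |rescale n q lam u x| ^ r)
      = fun x => (lam ^ ((n : ℝ) / q)) ^ r * |u (lam • x)| ^ r := by
    intro r; funext x
    rw [rescale, abs_mul, abs_of_nonneg (Real.rpow_nonneg hlam.le _),
      Real.mul_rpow (Real.rpow_nonneg hlam.le _) (abs_nonneg _)]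
  refine ⟨contDiff_rescale q lam hu.smooth, ?_, ?_, ?_⟩
  · rw [habs s]
    exact (((hu.int_s).comp_smul hlam.ne').const_mul _)
  · rw [habs q]
    exact (((hu.int_q).comp_smul hlam.ne').const_mul _)
  · have hc : (0:ℝ) ≤ lam ^ ((n : ℝ) / q) * lam := by positivity
    have : (fun x : Euc n => ‖fderiv ℝ (rescale n q lam u) x‖ ^ p)
        = fun x => (lam ^ ((n : ℝ) / q) * lam) ^ p * ‖fderiv ℝ u (lam • x)‖ ^ p := by
      funext x
      rw [fderiv_rescale hu.smooth, norm_smul, Real.norm_eq_abs, abs_of_nonneg hc,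
        Real.mul_rpow hc (norm_nonneg _)]
    rw [this]
    exact (((hu.int_grad).comp_smul hlam.ne').const_mul _)

lemma admissible_smul {n : ℕ} {p s q : ℝ} {u : Euc n → ℝ} (hu : Admissible n p s q u)
    (a : ℝ) : Admissible n p s q (fun x => a * u x) := by
  have habs : ∀ r : ℝ, (fun x : Euc n => |a * u x| ^ r)
      = fun x => |a| ^ r * |u x| ^ r := by
    intro r; funext x
    rw [abs_mul, Real.mul_rpow (abs_nonneg _) (abs_nonneg _)]
  have hgrad : (fun x : Euc n => ‖fderiv ℝ (fun y => a * u y) x‖ ^ p)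
      = fun x => |a| ^ p * ‖fderiv ℝ u x‖ ^ p := by
    funext x
    rw [fderiv_const_mul (hu.smooth.differentiable one_ne_zero x), norm_smul, Real.norm_eq_abs,
      Real.mul_rpow (abs_nonneg _) (norm_nonneg _)]
  refine ⟨contDiff_const.mul hu.smooth, ?_, ?_, ?_⟩
  · rw [habs s]; exact hu.int_s.const_mul _
  · rw [habs q]; exact hu.int_q.const_mul _
  · rw [hgrad]; exact hu.int_grad.const_mul _

lemma lpNorm_smul {n : ℕ} {r : ℝ} (hr : 0 < r) (a : ℝ) (u : Euc n → ℝ) :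
    lpNorm n r (fun x => a * u x) = |a| * lpNorm n r u := by
  have h0 : (0:ℝ) ≤ ∫ x : Euc n, |u x| ^ r :=
    integral_nonneg fun x => Real.rpow_nonneg (abs_nonneg _) _
  have : (fun x : Euc n => |a * u x| ^ r) = fun x => |a| ^ r * |u x| ^ r := by
    funext x; rw [abs_mul, Real.mul_rpow (abs_nonneg _) (abs_nonneg _)]
  rw [_root_.lpNorm, this, integral_const_mul _ _,
    Real.mul_rpow (Real.rpow_nonneg (abs_nonneg _) _) h0, ← Real.rpow_mul (abs_nonneg _),
    mul_one_div, div_self hr.ne', Real.rpow_one, _root_.lpNorm]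

lemma gradLpNorm_smul {n : ℕ} {p : ℝ} (hp : 0 < p) (a : ℝ) {u : Euc n → ℝ}
    (hu : ContDiff ℝ 1 u) :
    gradLpNorm n p (fun x => a * u x) = |a| * gradLpNorm n p u := by
  have h0 : (0:ℝ) ≤ ∫ x : Euc n, ‖fderiv ℝ u x‖ ^ p :=
    integral_nonneg fun x => Real.rpow_nonneg (norm_nonneg _) _
  have : (fun x : Euc n => ‖fderiv ℝ (fun y => a * u y) x‖ ^ p)
      = fun x => |a| ^ p * ‖fderiv ℝ u x‖ ^ p := by
    funext x
    rw [fderiv_const_mul (hu.differentiable one_ne_zero x), norm_smul, Real.norm_eq_abs,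
      Real.mul_rpow (abs_nonneg _) (norm_nonneg _)]
  rw [gradLpNorm, this, integral_const_mul _ _,
    Real.mul_rpow (Real.rpow_nonneg (abs_nonneg _) _) h0, ← Real.rpow_mul (abs_nonneg _),
    mul_one_div, div_self hp.ne', Real.rpow_one, gradLpNorm]

lemma lpNorm_pos_of_ne {n : ℕ} {r : ℝ} (hr : 0 < r) {u : Euc n → ℝ} (hu : Continuous u)
    (hint : Integrable (fun x : Euc n => |u x| ^ r)) {x₀ : Euc n} (h0 : u x₀ ≠ 0) :
    0 < ∫ x : Euc n, |u x| ^ r := by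
  refine integral_pos_of_cont (hu.abs.rpow_const fun x => Or.inr hr.le)
    (fun x => Real.rpow_nonneg (abs_nonneg _) _) hint
    (x₀ := x₀) (Real.rpow_pos_of_pos (abs_pos.2 h0) _).ne'

lemma pos_of_unit {n : ℕ} {p s q : ℝ} (hn : 2 ≤ n) (hp : 0 < p) (hs : 0 < s) (hq : 0 < q)
    {u : Euc n → ℝ} (hu : Admissible n p s q u) (hq1 : lpNorm n q u = 1) :
    0 < gradLpNorm n p u ∧ 0 < lpNorm n s u := by
  haveI : Nonempty (Fin n) := Fin.pos_iff_nonempty.mp (by omega)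
  haveI : Nontrivial (Euc n) := by
    haveI := Pi.nontrivial_at (f := fun _ : Fin n => ℝ) (Classical.arbitrary (Fin n))
    infer_instance
  -- there is a point where u ≠ 0
  have hInt : (∫ x : Euc n, |u x| ^ q) ≠ 0 := by
    intro h
    rw [_root_.lpNorm, h, Real.zero_rpow (by positivity : (1:ℝ)/q ≠ 0)] at hq1
    exact one_ne_zero hq1.symm
  have hx₀ : ∃ x₀ : Euc n, u x₀ ≠ 0 := by
    by_contra h
    push_neg at h
    apply hInt
    have : (fun x : Euc n => |u x| ^ q) = fun _ => 0 := by
      funext x; rw [h x, abs_zero, Real.zero_rpow hq.ne']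
    rw [this, integral_zero]
  obtain ⟨x₀, hx₀⟩ := hx₀
  constructor
  · -- gradient positivity: u is not constant
    have hx₁ : ∃ x₁ : Euc n, fderiv ℝ u x₁ ≠ 0 := by
      by_contra h
      push_neg at h
      have hconst : ∀ x, u x = u x₀ :=
        fun x => is_const_of_fderiv_eq_zero (hu.smooth.differentiable one_ne_zero) h x x₀
      have : Integrable (fun _ : Euc n => |u x₀| ^ q) := by
        have := hu.int_q
        simp_rw [fun x => hconst x] at this
        exact this
      rcases (integrable_const_iff).1 this with hc | hfin
      · exact (Real.rpow_pos_of_pos (abs_pos.2 hx₀) q).ne' hc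
      · replace hfin := hfin.measure_univ_lt_top
        rw [MeasureTheory.measure_univ_of_isAddLeftInvariant (volume : Measure (Euc n))] at hfin
        exact (lt_irrefl _ hfin).elim
    obtain ⟨x₁, hx₁⟩ := hx₁
    have hpos : 0 < ∫ x : Euc n, ‖fderiv ℝ u x‖ ^ p := by
      refine integral_pos_of_cont
        (((hu.smooth.continuous_fderiv one_ne_zero).norm).rpow_const fun x => Or.inr hp.le)
        (fun x => Real.rpow_nonneg (norm_nonneg _) _) hu.int_grad (x₀ := x₁)
        (Real.rpow_pos_of_pos (norm_pos_iff.2 hx₁) _).ne'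
    exact Real.rpow_pos_of_pos hpos _
  · exact Real.rpow_pos_of_pos
      (lpNorm_pos_of_ne hs hu.smooth.continuous hu.int_s hx₀) _

lemma lpNorm_rescale_q {n : ℕ} {q : ℝ} (hq0 : 0 < q) {lam : ℝ} (hlam : 0 < lam)
    (u : Euc n → ℝ) : lpNorm n q (rescale n q lam u) = lpNorm n q u := by
  rw [_root_.lpNorm, integral_abs_rescale hlam q u,
    show q * ((n:ℝ)/q) - (n:ℝ) = 0 from by field_simp; ring, Real.rpow_zero, one_mul, _root_.lpNorm]

lemma rescale_one {n : ℕ} {q : ℝ} (u : Euc n → ℝ) : rescale n q 1 u = u := by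
  funext x; simp [rescale]

lemma partA_isLeast {n : ℕ} {p s q θ : ℝ} (hP : Params n p s q θ) (u : Euc n → ℝ)
    (hu : Admissible n p s q u) (hgrad : 0 < gradLpNorm n p u) (hlps : 0 < lpNorm n s u) :
    IsLeast {r | ∃ lam > (0:ℝ), r = Ffun n p s (rescale n q lam u)}
      (eta0 n p s q * Gfun n p s θ u ^ kexp n p s q) := by
  obtain ⟨hα, hβ, hk, hθk, hθk'⟩ := exp_facts (by exact_mod_cast hP.hn) hP.hp hP.hpn hP.hs
    hP.hsq hP.hq hP.hθ0 hP.hθ1 hP.hθ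
  have hp0 : 0 < p := by linarith [hP.hp]
  have hs0 : 0 < s := by linarith [hP.hs]
  have hq0 : 0 < q := by linarith [hP.hs, hP.hsq]
  set A₀ := ∫ x : Euc n, ‖fderiv ℝ u x‖ ^ p with hA₀def
  set B₀ := ∫ x : Euc n, |u x| ^ s with hB₀def
  have hXA : gradLpNorm n p u = A₀ ^ ((1:ℝ)/p) := by rw [hA₀def]; rfl
  have hXB : lpNorm n s u = B₀ ^ ((1:ℝ)/s) := by rw [hB₀def]; rfl
  have hA0 : 0 < A₀ := by
    rcases (integral_nonneg fun x => Real.rpow_nonneg (norm_nonneg _) _ : 0 ≤ A₀).lt_or_eq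
      with h | h
    · exact h
    · exfalso
      have h' : A₀ = 0 := h.symm
      rw [hXA, h', Real.zero_rpow (by positivity : (1:ℝ)/p ≠ 0)] at hgrad
      exact lt_irrefl 0 hgrad
  have hB0 : 0 < B₀ := by
    rcases (integral_nonneg fun x => Real.rpow_nonneg (abs_nonneg _) _ : 0 ≤ B₀).lt_or_eq
      with h | h
    · exact h
    · exfalso
      have h' : B₀ = 0 := h.symm
      rw [hXB, h', Real.zero_rpow (by positivity : (1:ℝ)/s ≠ 0)] at hlps
      exact lt_irrefl 0 hlps
  have hscale : ∀ lam : ℝ, 0 < lam → Ffun n p s (rescale n q lam u)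
      = A₀ * lam ^ (expA n p q) + B₀ * lam ^ (-(expB n s q)) := by
    intro lam hlam
    rw [Ffun, integral_grad_rescale hlam p hu.smooth, integral_abs_rescale hlam s u,
      ← hA₀def, ← hB₀def,
      show p * ((n:ℝ)/q + 1) - (n:ℝ) = expA n p q from rfl,
      show s * ((n:ℝ)/q) - (n:ℝ) = -(expB n s q) from by rw [expB]; ring]
    ring
  have hsets : {r | ∃ lam > (0:ℝ), r = Ffun n p s (rescale n q lam u)}
      = {r : ℝ | ∃ l > (0:ℝ), r = A₀ * l ^ expA n p q + B₀ * l ^ (-(expB n s q))} := by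
    ext r
    constructor
    · rintro ⟨lam, hlam, rfl⟩; exact ⟨lam, hlam, hscale lam hlam⟩
    · rintro ⟨l, hl, rfl⟩; exact ⟨l, hl, (hscale l hl).symm⟩
  have he1 : (1/p)*θ*(kexp n p s q) = expB n s q/(expA n p q + expB n s q) := by
    rw [mul_assoc, hθk]; field_simp
  have he2 : (1/s)*(1-θ)*(kexp n p s q) = expA n p q/(expA n p q + expB n s q) := by
    rw [mul_assoc, hθk']; field_simp
  have hval : eta0 n p s q * Gfun n p s θ u ^ kexp n p s q
      = ((expA n p q + expB n s q)/expB n s q) ^ (expB n s q/(expA n p q + expB n s q))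
        * ((expA n p q + expB n s q)/expA n p q) ^ (expA n p q/(expA n p q + expB n s q))
        * (A₀ ^ (expB n s q/(expA n p q + expB n s q))
            * B₀ ^ (expA n p q/(expA n p q + expB n s q))) := by
    have hGXY : Gfun n p s θ u = A₀ ^ ((1/p)*θ) * B₀ ^ ((1/s)*(1-θ)) := by
      rw [Gfun, hXA, hXB, ← Real.rpow_mul hA0.le, ← Real.rpow_mul hB0.le]
    rw [hGXY, Real.mul_rpow (Real.rpow_nonneg hA0.le _) (Real.rpow_nonneg hB0.le _),
      ← Real.rpow_mul hA0.le, ← Real.rpow_mul hB0.le, he1, he2, eta0]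
  rw [hsets, hval]
  exact isLeast_scaling (expA n p q) (expB n s q) A₀ B₀ hα hβ hA0 hB0

/-- there is `η₀ > 0` with: (a) for every admissible `u` with nonzero gradient
and `L^s` norm, `inf_{λ>0} F(τ_λ u) = η₀ G(u)^k` and the infimum is attained; (b) consequently
`φ(1) = inf {F(u) : ‖u‖_q = 1} = η₀ G^k`. -/
theorem stmt_19 (n : ℕ) (p s q θ : ℝ) (hP : Params n p s q θ) :
    ∃ η₀ > (0 : ℝ),
      (∀ u : Euc n → ℝ, Admissible n p s q u →
        0 < gradLpNorm n p u → 0 < lpNorm n s u →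
        sInf {r | ∃ lam > (0 : ℝ), r = Ffun n p s (rescale n q lam u)} =
          η₀ * Gfun n p s θ u ^ (q * (n * p + p * s - n * s) / (n * p + p * q - n * s)) ∧
        ∃ lam > (0 : ℝ), Ffun n p s (rescale n q lam u) =
          η₀ * Gfun n p s θ u ^ (q * (n * p + p * s - n * s) / (n * p + p * q - n * s))) ∧
      sInf {r | ∃ u : Euc n → ℝ, Admissible n p s q u ∧ lpNorm n q u = 1 ∧
          r = Ffun n p s u} =
        η₀ * GNSconst n p s q θ ^
          (q * (n * p + p * s - n * s) / (n * p + p * q - n * s)) := by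
  obtain ⟨hα, hβ, hk, hθk, hθk'⟩ := exp_facts (by exact_mod_cast hP.hn) hP.hp hP.hpn hP.hs
    hP.hsq hP.hq hP.hθ0 hP.hθ1 hP.hθ
  have hp0 : 0 < p := by linarith [hP.hp]
  have hs0 : 0 < s := by linarith [hP.hs]
  have hq0 : 0 < q := by linarith [hP.hs, hP.hsq]
  have hkeq : q * (n * p + p * s - n * s) / (n * p + p * q - n * s) = kexp n p s q := rfl
  have hη : 0 < eta0 n p s q := by
    rw [eta0]
    have hγ : 0 < expA n p q + expB n s q := by linarith
    positivity
  refine ⟨eta0 n p s q, hη, ?_, ?_⟩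
  · intro u hu hgrad hlps
    have hIL := partA_isLeast hP u hu hgrad hlps
    rw [hkeq]
    refine ⟨hIL.csInf_eq, ?_⟩
    obtain ⟨lam, hlam, hval⟩ := hIL.1
    exact ⟨lam, hlam, hval.symm⟩
  · -- part (b)
    rw [hkeq]
    have hRnonneg : ∀ c ∈ {c | ∃ u : Euc n → ℝ, Admissible n p s q u ∧ u ≠ 0 ∧
        c = GNSRatio n p s q θ u}, 0 ≤ c := by
      rintro c ⟨u, hu, hne, rfl⟩
      exact div_nonneg (mul_nonneg (Real.rpow_nonneg
        (Real.rpow_nonneg (integral_nonneg fun x => Real.rpow_nonneg (norm_nonneg _) _) _) _)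
        (Real.rpow_nonneg
          (Real.rpow_nonneg (integral_nonneg fun x => Real.rpow_nonneg (abs_nonneg _) _) _) _))
        (Real.rpow_nonneg (integral_nonneg fun x => Real.rpow_nonneg (abs_nonneg _) _) _)
    have hGNSnn : 0 ≤ GNSconst n p s q θ := Real.sInf_nonneg hRnonneg
    have hRb : BddBelow {c | ∃ u : Euc n → ℝ, Admissible n p s q u ∧ u ≠ 0 ∧
        c = GNSRatio n p s q θ u} := ⟨0, hRnonneg⟩
    have hFnonneg : ∀ r ∈ {r | ∃ u : Euc n → ℝ, Admissible n p s q u ∧ lpNorm n q u = 1 ∧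
        r = Ffun n p s u}, 0 ≤ r := by
      rintro r ⟨u, hu, _, rfl⟩
      exact add_nonneg (integral_nonneg fun x => Real.rpow_nonneg (norm_nonneg _) _)
        (integral_nonneg fun x => Real.rpow_nonneg (abs_nonneg _) _)
    have hSbb : BddBelow {r | ∃ u : Euc n → ℝ, Admissible n p s q u ∧ lpNorm n q u = 1 ∧
        r = Ffun n p s u} := ⟨0, hFnonneg⟩
    -- key construction: for each nonzero admissible u, the value η₀ (GNSRatio u)^k lies in S_b
    have hmem : ∀ u : Euc n → ℝ, Admissible n p s q u → u ≠ 0 →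
        eta0 n p s q * GNSRatio n p s q θ u ^ kexp n p s q ∈
          {r | ∃ u : Euc n → ℝ, Admissible n p s q u ∧ lpNorm n q u = 1 ∧
            r = Ffun n p s u} := by
      intro u hu hne
      obtain ⟨x₀, hx₀⟩ := Function.ne_iff.mp hne
      have hlqint : 0 < ∫ x : Euc n, |u x| ^ q :=
        lpNorm_pos_of_ne hq0 hu.smooth.continuous hu.int_q hx₀
      have hlq : 0 < lpNorm n q u := Real.rpow_pos_of_pos hlqint _
      have hc : 0 < (lpNorm n q u)⁻¹ := inv_pos.mpr hlq
      set v : Euc n → ℝ := fun x => (lpNorm n q u)⁻¹ * u x with hvdef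
      have hv : Admissible n p s q v := admissible_smul hu _
      have hvq : lpNorm n q v = 1 := by
        rw [hvdef, lpNorm_smul hq0, abs_of_pos hc, inv_mul_cancel₀ hlq.ne']
      obtain ⟨hvg, hvs⟩ := pos_of_unit hP.hn hp0 hs0 hq0 hv hvq
      have hRatio : GNSRatio n p s q θ u = Gfun n p s θ v := by
        rw [GNSRatio, Gfun, hvdef, gradLpNorm_smul hp0 _ hu.smooth, lpNorm_smul hs0,
          Real.mul_rpow (abs_nonneg _) (by
            exact Real.rpow_nonneg (integral_nonneg fun x =>
              Real.rpow_nonneg (norm_nonneg _) _) _),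
          Real.mul_rpow (abs_nonneg _) (by
            exact Real.rpow_nonneg (integral_nonneg fun x =>
              Real.rpow_nonneg (abs_nonneg _) _) _),
          abs_of_pos hc]
        rw [show ((lpNorm n q u)⁻¹ ^ θ * gradLpNorm n p u ^ θ *
            ((lpNorm n q u)⁻¹ ^ (1-θ) * lpNorm n s u ^ (1-θ)))
            = ((lpNorm n q u)⁻¹ ^ θ * (lpNorm n q u)⁻¹ ^ (1-θ)) *
              (gradLpNorm n p u ^ θ * lpNorm n s u ^ (1-θ)) from by ring,
          ← Real.rpow_add hc, show θ + (1-θ) = (1:ℝ) from by ring, Real.rpow_one]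
        rw [div_eq_inv_mul]
      obtain ⟨lam, hlam, hval⟩ := (partA_isLeast hP v hv hvg hvs).1
      refine ⟨rescale n q lam v, admissible_rescale hv hlam, ?_, ?_⟩
      · rw [lpNorm_rescale_q hq0 hlam, hvq]
      · rw [hRatio]
        exact hval
    by_cases hex : ∃ u : Euc n → ℝ, Admissible n p s q u ∧ u ≠ 0
    · obtain ⟨u₀, hu₀, hne₀⟩ := hex
      have hSbne : Set.Nonempty {r | ∃ u : Euc n → ℝ, Admissible n p s q u ∧
          lpNorm n q u = 1 ∧ r = Ffun n p s u} := ⟨_, hmem u₀ hu₀ hne₀⟩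
      have hRne : Set.Nonempty {c | ∃ u : Euc n → ℝ, Admissible n p s q u ∧ u ≠ 0 ∧
          c = GNSRatio n p s q θ u} := ⟨_, u₀, hu₀, hne₀, rfl⟩
      apply le_antisymm
      · apply le_of_forall_pos_le_add
        intro ε hε
        have hcont : ContinuousAt (fun x : ℝ => eta0 n p s q * x ^ kexp n p s q)
            (GNSconst n p s q θ) :=
          continuousAt_const.mul (Real.continuousAt_rpow_const _ _ (Or.inr hk.le))
        obtain ⟨δ, hδ, hδ'⟩ := Metric.continuousAt_iff.mp hcont ε hε
        obtain ⟨a, haR, halt⟩ := Real.lt_sInf_add_pos hRne hδ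
        have h1 : GNSconst n p s q θ ≤ a := csInf_le hRb haR
        have h2 : dist a (GNSconst n p s q θ) < δ := by
          rw [Real.dist_eq, abs_of_nonneg (by linarith)]
          have : sInf {c | ∃ u : Euc n → ℝ, Admissible n p s q u ∧ u ≠ 0 ∧
              c = GNSRatio n p s q θ u} = GNSconst n p s q θ := rfl
          linarith [this ▸ halt]
        have h3 := hδ' h2
        rw [Real.dist_eq] at h3
        obtain ⟨u, hu, hne, rfl⟩ := haR
        have h4 : sInf {r | ∃ u : Euc n → ℝ, Admissible n p s q u ∧ lpNorm n q u = 1 ∧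
            r = Ffun n p s u} ≤ eta0 n p s q * GNSRatio n p s q θ u ^ kexp n p s q :=
          csInf_le hSbb (hmem u hu hne)
        have h5 := abs_lt.mp h3
        linarith [h5.1, h5.2]
      · apply le_csInf hSbne
        rintro r ⟨u, hu, huq, rfl⟩
        have hune : u ≠ 0 := by
          intro h
          rw [h] at huq
          simp only [_root_.lpNorm, Pi.zero_apply, abs_zero, Real.zero_rpow hq0.ne',
            integral_zero] at huq
          rw [Real.zero_rpow (by positivity : (1:ℝ)/q ≠ 0)] at huq
          exact zero_ne_one huq
        obtain ⟨hg, hs'⟩ := pos_of_unit hP.hn hp0 hs0 hq0 hu huq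
        have hIL := partA_isLeast hP u hu hg hs'
        have hFf : Ffun n p s u ∈ {r | ∃ lam > (0:ℝ), r = Ffun n p s (rescale n q lam u)} :=
          ⟨1, one_pos, by rw [rescale_one]⟩
        have h5 : eta0 n p s q * Gfun n p s θ u ^ kexp n p s q ≤ Ffun n p s u := hIL.2 hFf
        have h6 : GNSRatio n p s q θ u = Gfun n p s θ u := by
          rw [GNSRatio, Gfun, huq, div_one]
        have h7 : GNSconst n p s q θ ≤ GNSRatio n p s q θ u :=
          csInf_le hRb ⟨u, hu, hune, rfl⟩
        have h8 : eta0 n p s q * GNSconst n p s q θ ^ kexp n p s q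
            ≤ eta0 n p s q * GNSRatio n p s q θ u ^ kexp n p s q :=
          mul_le_mul_of_nonneg_left (Real.rpow_le_rpow hGNSnn h7 hk.le) hη.le
        rw [h6] at h8
        linarith
    · push_neg at hex
      have hSb : {r | ∃ u : Euc n → ℝ, Admissible n p s q u ∧ lpNorm n q u = 1 ∧
          r = Ffun n p s u} = ∅ := by
        ext r
        simp only [mem_setOf_eq, Set.mem_empty_iff_false, iff_false]
        rintro ⟨u, hu, huq, rfl⟩
        have h := hex u hu
        rw [h] at huq
        simp only [_root_.lpNorm, Pi.zero_apply, abs_zero, Real.zero_rpow hq0.ne',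
          integral_zero] at huq
        rw [Real.zero_rpow (by positivity : (1:ℝ)/q ≠ 0)] at huq
        exact zero_ne_one huq
      have hR : GNSconst n p s q θ = 0 := by
        rw [GNSconst, show {c | ∃ u : Euc n → ℝ, Admissible n p s q u ∧ u ≠ 0 ∧
            c = GNSRatio n p s q θ u} = ∅ from ?_, Real.sInf_empty]
        ext c
        simp only [mem_setOf_eq, Set.mem_empty_iff_false, iff_false]
        rintro ⟨u, hu, hne, rfl⟩
        exact hne (hex u hu)
      rw [hSb, Real.sInf_empty, hR, Real.zero_rpow hk.ne', mul_zero]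

end
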